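/- arXiv:1205.3694 — 2 statements merged into one kernel-verified Lean document; each statement's English description precedes it below -/
import Mathlib

section
/- Let (X,R,μ) and (Y,R',ν) be probability spaces over K whose covering rings R and R' are separating, and assume that for every x ∈ X the set X∖{x} is a union of countably many members of R, and for every y ∈ Y the set Y∖{y} is a union of countably many members of R'. Let T and S be invertible measure preserving transformations of (X,R,μ) and (Y,R',ν) respectively, and suppose there is a measure algebra isomorphism Φ : (R,μ) → (R',ν) with Φ(T⁻¹(A)) = S⁻¹(Φ(A)) for every A ∈ R. Then there exists a bijection φ : X∖X₀(μ) → Y∖Y₀(ν) such that φ(A∖X₀(μ)) = Φ(A)∖Y₀(ν) for every A ∈ R and φ(T(x)) = S(φ(x)) for every x ∈ X∖X₀(μ); in particular T and S are isomorphic. -/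
open scoped Classical

/-- A covering ring of subsets of `X`: it covers `X` and is closed under
intersections, unions and differences. -/
def IsCoveringRing {X : Type*} (R : Set (Set X)) : Prop :=
  (∀ x : X, ∃ A ∈ R, x ∈ A) ∧
    ∀ A ∈ R, ∀ B ∈ R, A ∩ B ∈ R ∧ A ∪ B ∈ R ∧ A \ B ∈ R

/-- `R` is separating: distinct points can be separated by a member of `R`. -/
def Separating {X : Type*} (R : Set (Set X)) : Prop :=
  ∀ x y : X, x ≠ y → ∃ A ∈ R, x ∈ A ∧ y ∉ A

/-- A shrinking collection: the intersection of any two members contains a member. -/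
def Shrinking {X : Type*} (𝒜 : Set (Set X)) : Prop :=
  ∀ A ∈ 𝒜, ∀ B ∈ 𝒜, ∃ C ∈ 𝒜, C ⊆ A ∩ B

/-- A `K`-valued measure on a covering ring `R`: additive, bounded and continuous. -/
structure IsKMeasure {X : Type*} {K : Type*} [NormedField K]
    (R : Set (Set X)) (μ : Set X → K) : Prop where
  additive : ∀ A ∈ R, ∀ B ∈ R, Disjoint A B → μ (A ∪ B) = μ A + μ B
  bounded : ∀ A ∈ R, ∃ M : ℝ, ∀ B ∈ R, B ⊆ A → ‖μ B‖ ≤ M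
  cont : ∀ 𝒜 ⊆ R, Shrinking 𝒜 → ⋂₀ 𝒜 = ∅ →
    ∀ ε : ℝ, 0 < ε → ∃ A₀ ∈ 𝒜, ∀ A ∈ 𝒜, A ⊆ A₀ → ‖μ A‖ < ε

/-- `‖A‖_μ = sup {|μ B| : B ∈ R, B ⊆ A}`. -/
noncomputable def setNorm {X K : Type*} [NormedField K]
    (R : Set (Set X)) (μ : Set X → K) (A : Set X) : ℝ :=
  sSup {r : ℝ | ∃ B ∈ R, B ⊆ A ∧ r = ‖μ B‖}

/-- `N_μ(x) = inf {‖A‖_μ : A ∈ R, x ∈ A}`. -/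
noncomputable def normFun {X K : Type*} [NormedField K]
    (R : Set (Set X)) (μ : Set X → K) (x : X) : ℝ :=
  sInf {r : ℝ | ∃ A ∈ R, x ∈ A ∧ r = setNorm R μ A}

/-- `‖f‖_μ = sup_{x ∈ X} |f x| ⬝ N_μ(x)`. -/
noncomputable def fNorm {X K : Type*} [NormedField K]
    (R : Set (Set X)) (μ : Set X → K) (f : X → K) : ℝ :=
  sSup {r : ℝ | ∃ x : X, r = ‖f x‖ * normFun R μ x}

/-- A probability space: `R` is a covering algebra and `μ(X) = 1`. -/
def IsProbSpace {X K : Type*} [NormedField K] (R : Set (Set X)) (μ : Set X → K) : Prop :=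
  IsCoveringRing R ∧ Set.univ ∈ R ∧ IsKMeasure R μ ∧ μ Set.univ = 1

/-- A measure algebra isomorphism `(R,μ) → (R',ν)`. -/
def IsMeasAlgIso {X Y K : Type*} [NormedField K] (R : Set (Set X)) (μ : Set X → K)
    (R' : Set (Set Y)) (ν : Set Y → K) (Φ : Set X → Set Y) : Prop :=
  Set.BijOn Φ R R' ∧
    (∀ A ∈ R, ∀ B ∈ R, Φ (A ∪ B) = Φ A ∪ Φ B) ∧
    (∀ A ∈ R, Φ (Set.univ \ A) = Set.univ \ Φ A) ∧
    (∀ A ∈ R, ν (Φ A) = μ A)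

/-- An invertible measure preserving transformation of `(X,R,μ)`. -/
def IsInvMPT {X K : Type*} [NormedField K] (R : Set (Set X)) (μ : Set X → K)
    (T : X → X) : Prop :=
  Function.Bijective T ∧
    (∀ A ∈ R, T '' A ∈ R) ∧ (∀ A ∈ R, T ⁻¹' A ∈ R) ∧
    (∀ A ∈ R, μ (T '' A) = μ A) ∧ (∀ A ∈ R, μ (T ⁻¹' A) = μ A)

/-- A finite partition of `X` by pairwise disjoint nonempty members of `R`. -/
def IsFinPartition {X : Type*} (R : Set (Set X)) (α : Finset (Set X)) : Prop :=
  (∀ A ∈ α, A ∈ R) ∧ (∀ A ∈ α, A ≠ ∅) ∧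
    (∀ A ∈ α, ∀ B ∈ α, A ≠ B → Disjoint A B) ∧
    ⋃₀ (α : Set (Set X)) = Set.univ

/-- The join `α ∨ β` of two partitions, discarding empty intersections. -/
noncomputable def pJoin {X : Type*} (α β : Finset (Set X)) : Finset (Set X) :=
  (Finset.image₂ (fun A B => A ∩ B) α β).filter (fun C => C ≠ ∅)

/-- `M(α)`: the number of members of `α` of positive norm. -/
noncomputable def Mcard {X K : Type*} [NormedField K] (R : Set (Set X)) (μ : Set X → K)
    (α : Finset (Set X)) : ℕ :=
  (α.filter (fun A => 0 < setNorm R μ A)).card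

/-- `H_μ(α) = (min {‖A‖_μ : A ∈ α, ‖A‖_μ > 0}) * log₂ M(α)` (and `0` if `M(α) = 0`,
since `sInf ∅ = 0` and `log₂ 0 = 0` in Mathlib). -/
noncomputable def Hent {X K : Type*} [NormedField K] (R : Set (Set X)) (μ : Set X → K)
    (α : Finset (Set X)) : ℝ :=
  sInf {r : ℝ | ∃ A ∈ α, 0 < setNorm R μ A ∧ r = setNorm R μ A} *
    Real.logb 2 (Mcard R μ α)

/-- `joinSeq T α n = α ∨ T⁻¹α ∨ ⋯ ∨ T^{-n}α`. -/
noncomputable def joinSeq {X : Type*} (T : X → X) (α : Finset (Set X)) : ℕ → Finset (Set X)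
  | 0 => α
  | n + 1 => pJoin (joinSeq T α n) (α.image (fun A => T^[n + 1] ⁻¹' A))

/-- `h_μ(T,α) = lim_{n→∞} H_μ(α ∨ T⁻¹α ∨ ⋯ ∨ T^{-(n-1)}α)/n`. -/
noncomputable def hMeasPart {X K : Type*} [NormedField K] (R : Set (Set X)) (μ : Set X → K)
    (T : X → X) (α : Finset (Set X)) : ℝ :=
  Filter.limUnder Filter.atTop (fun n : ℕ => Hent R μ (joinSeq T α n) / (n + 1))

/-- `h_μ(T) = sup_α h_μ(T,α)` over finite partitions `α` of `X` relative to `R`. -/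
noncomputable def hMeas {X K : Type*} [NormedField K] (R : Set (Set X)) (μ : Set X → K)
    (T : X → X) : ℝ :=
  sSup {r : ℝ | ∃ α : Finset (Set X), IsFinPartition R α ∧ r = hMeasPart R μ T α}

/-- The partition `α(𝒰)` associated to a finite cover `𝒰`: nonempty sets of the form
`A₁ ∩ ⋯ ∩ A_k` where each `Aᵢ` is `Uᵢ` or `X ∖ Uᵢ`. -/
noncomputable def coverPart {X : Type*} (𝒰 : Finset (Set X)) : Finset (Set X) :=
  ((𝒰.powerset).image fun S => (⋂ U ∈ S, U) ∩ ⋂ U ∈ 𝒰 \ S, (Set.univ \ U)).filter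
    (fun C => C ≠ ∅)

/-- The join `𝒰 ∨ 𝒲` of two covers. -/
noncomputable def cJoin {X : Type*} (𝒰 𝒲 : Finset (Set X)) : Finset (Set X) :=
  Finset.image₂ (fun U W => U ∩ W) 𝒰 𝒲

/-- `N(𝒰)`: the least cardinality of a subcover of `𝒰`. -/
noncomputable def coverN {X : Type*} (𝒰 : Finset (Set X)) : ℕ :=
  sInf {n : ℕ | ∃ 𝒱 : Finset (Set X), 𝒱 ⊆ 𝒰 ∧ ⋃₀ (𝒱 : Set (Set X)) = Set.univ ∧ 𝒱.card = n}

/-- `H_top(𝒰) = log₂ N(𝒰)`. -/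
noncomputable def Htop {X : Type*} (𝒰 : Finset (Set X)) : ℝ :=
  Real.logb 2 (coverN 𝒰)

/-- `cJoinSeq T 𝒰 n = 𝒰 ∨ T⁻¹𝒰 ∨ ⋯ ∨ T^{-n}𝒰`. -/
noncomputable def cJoinSeq {X : Type*} (T : X → X) (𝒰 : Finset (Set X)) : ℕ → Finset (Set X)
  | 0 => 𝒰
  | n + 1 => cJoin (cJoinSeq T 𝒰 n) (𝒰.image (fun U => T^[n + 1] ⁻¹' U))

/-- `h_top(T,𝒰) = lim_{n→∞} H_top(𝒰 ∨ T⁻¹𝒰 ∨ ⋯ ∨ T^{-(n-1)}𝒰)/n`. -/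
noncomputable def hTopCov {X : Type*} (T : X → X) (𝒰 : Finset (Set X)) : ℝ :=
  Filter.limUnder Filter.atTop (fun n : ℕ => Htop (cJoinSeq T 𝒰 n) / (n + 1))

/-- `h_top(T) = sup_𝒰 h_top(T,𝒰)` over finite open covers `𝒰` of `X` for the
topology `t`. -/
noncomputable def hTop {X : Type*} (t : TopologicalSpace X) (T : X → X) : ℝ :=
  sSup {r : ℝ | ∃ 𝒰 : Finset (Set X), (∀ U ∈ 𝒰, t.IsOpen U) ∧
    ⋃₀ (𝒰 : Set (Set X)) = Set.univ ∧ r = hTopCov T 𝒰}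

section Aux

variable {X Y K : Type*} [NontriviallyNormedField K]

lemma aux_empty_mem {R : Set (Set X)} {μ : Set X → K} (h : IsProbSpace R μ) :
    (∅ : Set X) ∈ R := by
  have := (h.1.2 Set.univ h.2.1 Set.univ h.2.1).2.2
  simpa using this

lemma aux_mu_empty {R : Set (Set X)} {μ : Set X → K} (h : IsProbSpace R μ) :
    μ (∅ : Set X) = 0 := by
  have h1 := h.2.2.1.additive ∅ (aux_empty_mem h) ∅ (aux_empty_mem h) (by simp)
  rw [Set.union_empty] at h1
  have h2 : μ ∅ + μ ∅ = μ ∅ + 0 := by rw [add_zero]; exact h1.symm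
  exact add_left_cancel h2

lemma aux_nonempty {R : Set (Set X)} {μ : Set X → K} (h : IsProbSpace R μ) : Nonempty X := by
  by_contra hX
  have hu : (Set.univ : Set X) = ∅ := by
    simp [Set.univ_eq_empty_iff, not_nonempty_iff.mp hX]
  have h1 := h.2.2.2
  rw [hu, aux_mu_empty h] at h1
  exact zero_ne_one h1

lemma aux_compl_mem {R : Set (Set X)} {μ : Set X → K} (h : IsProbSpace R μ)
    {A : Set X} (hA : A ∈ R) : Set.univ \ A ∈ R :=
  (h.1.2 Set.univ h.2.1 A hA).2.2

lemma aux_norm_le_setNorm {R : Set (Set X)} {μ : Set X → K} (h : IsProbSpace R μ)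
    {A : Set X} (hA : A ∈ R) {B : Set X} (hB : B ∈ R) (hBA : B ⊆ A) :
    ‖μ B‖ ≤ setNorm R μ A := by
  obtain ⟨M, hM⟩ := h.2.2.1.bounded A hA
  refine le_csSup ⟨M, ?_⟩ ⟨B, hB, hBA, rfl⟩
  rintro r ⟨C, hC, hCA, rfl⟩
  exact hM C hC hCA

lemma aux_setNorm_nonneg {R : Set (Set X)} {μ : Set X → K} (h : IsProbSpace R μ)
    {A : Set X} (hA : A ∈ R) : 0 ≤ setNorm R μ A := by
  have := aux_norm_le_setNorm h hA (aux_empty_mem h) (Set.empty_subset A)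
  rwa [aux_mu_empty h, norm_zero] at this

lemma aux_setNorm_le {R : Set (Set X)} {μ : Set X → K} (h : IsProbSpace R μ)
    {A : Set X} (_hA : A ∈ R) {c : ℝ} (hc : ∀ B ∈ R, B ⊆ A → ‖μ B‖ ≤ c) :
    setNorm R μ A ≤ c := by
  have h0 : (0 : ℝ) ≤ c := by
    have := hc ∅ (aux_empty_mem h) (Set.empty_subset A)
    rwa [aux_mu_empty h, norm_zero] at this
  refine Real.sSup_le ?_ h0
  rintro r ⟨B, hB, hBA, rfl⟩
  exact hc B hB hBA

lemma aux_normFun_le {R : Set (Set X)} {μ : Set X → K} (h : IsProbSpace R μ)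
    {A : Set X} (hA : A ∈ R) {x : X} (hx : x ∈ A) :
    normFun R μ x ≤ setNorm R μ A := by
  refine csInf_le ⟨0, ?_⟩ ⟨A, hA, hx, rfl⟩
  rintro r ⟨B, hB, _, rfl⟩
  exact aux_setNorm_nonneg h hB

lemma aux_normFun_nonneg {R : Set (Set X)} {μ : Set X → K} (h : IsProbSpace R μ)
    (x : X) : 0 ≤ normFun R μ x := by
  refine le_csInf ⟨setNorm R μ Set.univ, Set.univ, h.2.1, Set.mem_univ x, rfl⟩ ?_
  rintro r ⟨B, hB, _, rfl⟩
  exact aux_setNorm_nonneg h hB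

variable {R : Set (Set X)} {μ : Set X → K} {R' : Set (Set Y)} {ν : Set Y → K}
  {Φ : Set X → Set Y}

lemma aux_phi_univ (hXp : IsProbSpace R μ) (hΦ : IsMeasAlgIso R μ R' ν Φ) :
    Φ Set.univ = Set.univ := by
  have hc := hΦ.2.2.1 Set.univ hXp.2.1
  rw [Set.diff_self] at hc
  have hu := hΦ.2.1 Set.univ hXp.2.1 ∅ (aux_empty_mem hXp)
  rw [Set.union_empty, hc] at hu
  rw [hu, Set.union_diff_self, Set.union_univ]

lemma aux_phi_empty (hXp : IsProbSpace R μ) (hΦ : IsMeasAlgIso R μ R' ν Φ) :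
    Φ ∅ = ∅ := by
  have hc := hΦ.2.2.1 Set.univ hXp.2.1
  rw [Set.diff_self, aux_phi_univ hXp hΦ, Set.diff_self] at hc
  exact hc

lemma aux_phi_mono (hΦ : IsMeasAlgIso R μ R' ν Φ)
    {A B : Set X} (hA : A ∈ R) (hB : B ∈ R) (hAB : A ⊆ B) : Φ A ⊆ Φ B := by
  have h1 := hΦ.2.1 A hA B hB
  rw [Set.union_eq_right.mpr hAB] at h1
  rw [h1]
  exact Set.subset_union_left

lemma aux_phi_subset_rev (hXp : IsProbSpace R μ) (hΦ : IsMeasAlgIso R μ R' ν Φ)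
    {A B : Set X} (hA : A ∈ R) (hB : B ∈ R) (hAB : Φ A ⊆ Φ B) : A ⊆ B := by
  have h1 := hΦ.2.1 A hA B hB
  rw [Set.union_eq_right.mpr hAB] at h1
  have h2 : A ∪ B = B := hΦ.1.2.1 (hXp.1.2 A hA B hB).2.1 hB h1
  rw [← h2]
  exact Set.subset_union_left

lemma aux_phi_inter (hXp : IsProbSpace R μ) (hΦ : IsMeasAlgIso R μ R' ν Φ)
    {A B : Set X} (hA : A ∈ R) (hB : B ∈ R) : Φ (A ∩ B) = Φ A ∩ Φ B := by
  have hcA := aux_compl_mem hXp hA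
  have hcB := aux_compl_mem hXp hB
  have hcu : (Set.univ \ A) ∪ (Set.univ \ B) ∈ R := (hXp.1.2 _ hcA _ hcB).2.1
  have key : A ∩ B = Set.univ \ ((Set.univ \ A) ∪ (Set.univ \ B)) := by
    ext z; simp
  rw [key, hΦ.2.2.1 _ hcu, hΦ.2.1 _ hcA _ hcB, hΦ.2.2.1 A hA, hΦ.2.2.1 B hB]
  ext z; simp

lemma aux_phi_setNorm (hXp : IsProbSpace R μ) (hYp : IsProbSpace R' ν)
    (hΦ : IsMeasAlgIso R μ R' ν Φ) {A : Set X} (hA : A ∈ R) :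
    setNorm R' ν (Φ A) = setNorm R μ A := by
  have hΦA : Φ A ∈ R' := hΦ.1.1 hA
  apply le_antisymm
  · refine aux_setNorm_le hYp hΦA ?_
    intro B' hB' hB'A
    obtain ⟨B, hB, rfl⟩ := hΦ.1.2.2 hB'
    rw [hΦ.2.2.2 B hB]
    exact aux_norm_le_setNorm hXp hA hB (aux_phi_subset_rev hXp hΦ hB hA hB'A)
  · refine aux_setNorm_le hXp hA ?_
    intro B hB hBA
    rw [← hΦ.2.2.2 B hB]
    exact aux_norm_le_setNorm hYp hΦA (hΦ.1.1 hB) (aux_phi_mono hΦ hB hA hBA)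

/-- Membership characterization: uniqueness. -/
lemma aux_key_unique (hsepY : Separating R') (hΦ : IsMeasAlgIso R μ R' ν Φ)
    {x : X} {y₁ y₂ : Y} (h1 : ∀ A ∈ R, (y₁ ∈ Φ A ↔ x ∈ A))
    (h2 : ∀ A ∈ R, (y₂ ∈ Φ A ↔ x ∈ A)) : y₁ = y₂ := by
  by_contra hne
  obtain ⟨A', hA', hy₁, hy₂⟩ := hsepY y₁ y₂ hne
  obtain ⟨A, hA, rfl⟩ := hΦ.1.2.2 hA'
  exact hy₂ ((h2 A hA).mpr ((h1 A hA).mp hy₁))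

/-- Membership characterization: existence. -/
lemma aux_key_exists (hXp : IsProbSpace R μ) (hYp : IsProbSpace R' ν)
    (hΦ : IsMeasAlgIso R μ R' ν Φ) {x : X} (hx : normFun R μ x ≠ 0) :
    ∃ y : Y, ∀ A ∈ R, (y ∈ Φ A ↔ x ∈ A) := by
  set 𝒜 : Set (Set Y) := Φ '' {A | A ∈ R ∧ x ∈ A} with h𝒜
  by_cases hne : ⋂₀ 𝒜 = ∅
  · exfalso
    apply hx
    have hsub : 𝒜 ⊆ R' := by rintro _ ⟨A, ⟨hA, _⟩, rfl⟩; exact hΦ.1.1 hA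
    have hshrink : Shrinking 𝒜 := by
      rintro _ ⟨A1, ⟨hA1, hx1⟩, rfl⟩ _ ⟨A2, ⟨hA2, hx2⟩, rfl⟩
      refine ⟨Φ (A1 ∩ A2), ⟨A1 ∩ A2, ⟨(hXp.1.2 A1 hA1 A2 hA2).1, hx1, hx2⟩, rfl⟩, ?_⟩
      rw [aux_phi_inter hXp hΦ hA1 hA2]
    have hle : ∀ ε : ℝ, 0 < ε → normFun R μ x ≤ 2 * ε := by
      intro ε hε
      obtain ⟨A₀', hA₀'𝒜, hsmall⟩ := hYp.2.2.1.cont 𝒜 hsub hshrink hne ε hε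
      obtain ⟨A₀, ⟨hA₀R, hxA₀⟩, rfl⟩ := hA₀'𝒜
      have hbd : ∀ B ∈ R, B ⊆ A₀ → ‖μ B‖ ≤ 2 * ε := by
        intro B hBR hBA
        by_cases hxB : x ∈ B
        · have hmem : Φ B ∈ 𝒜 := ⟨B, ⟨hBR, hxB⟩, rfl⟩
          have := hsmall (Φ B) hmem (aux_phi_mono hΦ hBR hA₀R hBA)
          rw [hΦ.2.2.2 B hBR] at this
          linarith
        · have hB' : A₀ \ B ∈ R := (hXp.1.2 A₀ hA₀R B hBR).2.2
          have hmem1 : Φ (A₀ \ B) ∈ 𝒜 := ⟨A₀ \ B, ⟨hB', hxA₀, hxB⟩, rfl⟩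
          have h1 := hsmall (Φ (A₀ \ B)) hmem1
            (aux_phi_mono hΦ hB' hA₀R Set.diff_subset)
          rw [hΦ.2.2.2 _ hB'] at h1
          have h2 := hsmall (Φ A₀) ⟨A₀, ⟨hA₀R, hxA₀⟩, rfl⟩ subset_rfl
          rw [hΦ.2.2.2 _ hA₀R] at h2
          have hadd : μ A₀ = μ B + μ (A₀ \ B) := by
            have := hXp.2.2.1.additive B hBR (A₀ \ B) hB' Set.disjoint_sdiff_right
            rwa [Set.union_diff_cancel hBA] at this
          have heq : μ B = μ A₀ - μ (A₀ \ B) := by rw [hadd]; ring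
          calc ‖μ B‖ = ‖μ A₀ - μ (A₀ \ B)‖ := by rw [heq]
            _ ≤ ‖μ A₀‖ + ‖μ (A₀ \ B)‖ := norm_sub_le _ _
            _ ≤ 2 * ε := by linarith
      calc normFun R μ x ≤ setNorm R μ A₀ := aux_normFun_le hXp hA₀R hxA₀
        _ ≤ 2 * ε := aux_setNorm_le hXp hA₀R hbd
    have h0 := aux_normFun_nonneg hXp x
    by_contra hne0
    have hpos : 0 < normFun R μ x := lt_of_le_of_ne h0 (Ne.symm hne0)
    have := hle (normFun R μ x / 4) (by linarith)
    linarith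
  · obtain ⟨y, hy⟩ := Set.nonempty_iff_ne_empty.mpr hne
    refine ⟨y, fun A hA => ⟨?_, fun hxA => hy (Φ A) ⟨A, ⟨hA, hxA⟩, rfl⟩⟩⟩
    intro hyA
    by_contra hxA
    have hcA : Set.univ \ A ∈ R := aux_compl_mem hXp hA
    have := hy (Φ (Set.univ \ A)) ⟨Set.univ \ A, ⟨hcA, Set.mem_univ x, hxA⟩, rfl⟩
    rw [hΦ.2.2.1 A hA] at this
    exact this.2 hyA

/-- Membership characterization preserves the norm function. -/
lemma aux_key_norm (hXp : IsProbSpace R μ) (hYp : IsProbSpace R' ν)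
    (hΦ : IsMeasAlgIso R μ R' ν Φ) {x : X} {y : Y}
    (hy : ∀ A ∈ R, (y ∈ Φ A ↔ x ∈ A)) :
    normFun R' ν y = normFun R μ x := by
  have hset : {r : ℝ | ∃ A ∈ R', y ∈ A ∧ r = setNorm R' ν A} =
      {r : ℝ | ∃ A ∈ R, x ∈ A ∧ r = setNorm R μ A} := by
    ext r
    constructor
    · rintro ⟨A', hA', hyA', rfl⟩
      obtain ⟨A, hA, rfl⟩ := hΦ.1.2.2 hA'
      exact ⟨A, hA, (hy A hA).mp hyA', aux_phi_setNorm hXp hYp hΦ hA⟩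
    · rintro ⟨A, hA, hxA, rfl⟩
      exact ⟨Φ A, hΦ.1.1 hA, (hy A hA).mpr hxA, (aux_phi_setNorm hXp hYp hΦ hA).symm⟩
  unfold normFun
  rw [hset]

/-- The inverse of a measure algebra isomorphism. -/
lemma aux_inv_iso (hXp : IsProbSpace R μ) (hΦ : IsMeasAlgIso R μ R' ν Φ) :
    IsMeasAlgIso R' ν R μ (Function.invFunOn Φ R) ∧
      (∀ A ∈ R, Function.invFunOn Φ R (Φ A) = A) ∧
      (∀ A' ∈ R', Φ (Function.invFunOn Φ R A') = A') := by
  set Ψ := Function.invFunOn Φ R with hΨdef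
  have hinv : Set.InvOn Ψ Φ R R' := hΦ.1.invOn_invFunOn
  have hbij : Set.BijOn Ψ R' R := Set.BijOn.symm hinv.symm hΦ.1
  have hleft : ∀ A ∈ R, Ψ (Φ A) = A := fun A hA => hinv.1 hA
  have hright : ∀ A' ∈ R', Φ (Ψ A') = A' := fun A' hA' => hinv.2 hA'
  refine ⟨⟨hbij, ?_, ?_, ?_⟩, hleft, hright⟩
  · intro A' hA' B' hB'
    have hA := hbij.1 hA'
    have hB := hbij.1 hB'
    have h1 : Φ (Ψ A' ∪ Ψ B') = A' ∪ B' := by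
      rw [hΦ.2.1 _ hA _ hB, hright A' hA', hright B' hB']
    have hmem : Ψ A' ∪ Ψ B' ∈ R := (hXp.1.2 _ hA _ hB).2.1
    rw [← h1, hleft _ hmem]
  · intro A' hA'
    have hA := hbij.1 hA'
    have h1 : Φ (Set.univ \ Ψ A') = Set.univ \ A' := by
      rw [hΦ.2.2.1 _ hA, hright A' hA']
    rw [← h1, hleft _ (aux_compl_mem hXp hA)]
  · intro A' hA'
    have hA := hbij.1 hA'
    rw [← hΦ.2.2.2 _ hA, hright A' hA']

lemma aux_setNorm_preimage {R : Set (Set X)} {μ : Set X → K} (hXp : IsProbSpace R μ)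
    {T : X → X} (hT : IsInvMPT R μ T) {A : Set X} (hA : A ∈ R) :
    setNorm R μ (T ⁻¹' A) = setNorm R μ A := by
  have hTA : T ⁻¹' A ∈ R := hT.2.2.1 A hA
  apply le_antisymm
  · refine aux_setNorm_le hXp hTA ?_
    intro B hB hBA
    have himg : T '' B ⊆ A := by
      calc T '' B ⊆ T '' (T ⁻¹' A) := Set.image_mono hBA
        _ = A := Set.image_preimage_eq A hT.1.2
    rw [← hT.2.2.2.1 B hB]
    exact aux_norm_le_setNorm hXp hA (hT.2.1 B hB) himg
  · refine aux_setNorm_le hXp hA ?_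
    intro B hB hBA
    rw [← hT.2.2.2.2 B hB]
    exact aux_norm_le_setNorm hXp hTA (hT.2.2.1 B hB) (Set.preimage_mono hBA)

lemma aux_normFun_T {R : Set (Set X)} {μ : Set X → K} (hXp : IsProbSpace R μ)
    {T : X → X} (hT : IsInvMPT R μ T) (x : X) :
    normFun R μ (T x) = normFun R μ x := by
  have hset : {r : ℝ | ∃ A ∈ R, T x ∈ A ∧ r = setNorm R μ A} =
      {r : ℝ | ∃ A ∈ R, x ∈ A ∧ r = setNorm R μ A} := by
    ext r
    constructor
    · rintro ⟨A, hA, hTx, rfl⟩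
      exact ⟨T ⁻¹' A, hT.2.2.1 A hA, hTx, (aux_setNorm_preimage hXp hT hA).symm⟩
    · rintro ⟨A, hA, hx, rfl⟩
      refine ⟨T '' A, hT.2.1 A hA, ⟨x, hx, rfl⟩, ?_⟩
      have h1 : T ⁻¹' (T '' A) = A := Set.preimage_image_eq A hT.1.1
      rw [← aux_setNorm_preimage hXp hT (hT.2.1 A hA), h1]
  unfold normFun
  rw [hset]

end Aux

/-- A conjugacy `Φ` between `T` and `S` induces a point isomorphism
`φ : X ∖ X₀(μ) → Y ∖ Y₀(ν)` with `φ(A ∖ X₀(μ)) = Φ(A) ∖ Y₀(ν)` for `A ∈ R` and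
`φ ∘ T = S ∘ φ` on `X ∖ X₀(μ)`. -/
theorem stmt7 {X Y K : Type*} [NontriviallyNormedField K] [CompleteSpace K]
    (hna : IsNonarchimedean (norm : K → ℝ))
    (R : Set (Set X)) (μ : Set X → K) (hXp : IsProbSpace R μ) (hsepX : Separating R)
    (hcX : ∀ x : X, ∃ f : ℕ → Set X, (∀ n, f n ∈ R) ∧ (⋃ n, f n) = Set.univ \ {x})
    (R' : Set (Set Y)) (ν : Set Y → K) (hYp : IsProbSpace R' ν) (hsepY : Separating R')
    (hcY : ∀ y : Y, ∃ g : ℕ → Set Y, (∀ n, g n ∈ R') ∧ (⋃ n, g n) = Set.univ \ {y})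
    (T : X → X) (hT : IsInvMPT R μ T) (S : Y → Y) (hS : IsInvMPT R' ν S)
    (Φ : Set X → Set Y) (hΦ : IsMeasAlgIso R μ R' ν Φ)
    (hΦT : ∀ A ∈ R, Φ (T ⁻¹' A) = S ⁻¹' (Φ A)) :
    ∃ φ : X → Y,
      Set.BijOn φ {x : X | normFun R μ x ≠ 0} {y : Y | normFun R' ν y ≠ 0} ∧
        (∀ A ∈ R,
          φ '' (A ∩ {x : X | normFun R μ x ≠ 0}) = Φ A ∩ {y : Y | normFun R' ν y ≠ 0}) ∧
        ∀ x ∈ {x : X | normFun R μ x ≠ 0}, φ (T x) = S (φ x) := by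
  classical
  have hYne : Nonempty Y := aux_nonempty hYp
  have hXne : Nonempty X := aux_nonempty hXp
  obtain ⟨hΨiso, hΨleft, hΨright⟩ := aux_inv_iso hXp hΦ
  set Ψ := Function.invFunOn Φ R with hΨdef
  let φ : X → Y := fun x =>
    if h : ∃ y : Y, ∀ A ∈ R, (y ∈ Φ A ↔ x ∈ A) then h.choose else Classical.arbitrary Y
  let ψ : Y → X := fun y =>
    if h : ∃ x : X, ∀ A' ∈ R', (x ∈ Ψ A' ↔ y ∈ A') then h.choose else Classical.arbitrary X
  have hφchar : ∀ x : X, normFun R μ x ≠ 0 → ∀ A ∈ R, (φ x ∈ Φ A ↔ x ∈ A) := by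
    intro x hx
    have h := aux_key_exists hXp hYp hΦ hx
    simp only [φ, dif_pos h]
    exact h.choose_spec
  have hψchar : ∀ y : Y, normFun R' ν y ≠ 0 → ∀ A' ∈ R', (ψ y ∈ Ψ A' ↔ y ∈ A') := by
    intro y hy
    have h := aux_key_exists hYp hXp hΨiso hy
    simp only [ψ, dif_pos h]
    exact h.choose_spec
  have hφnorm : ∀ x : X, normFun R μ x ≠ 0 → normFun R' ν (φ x) = normFun R μ x :=
    fun x hx => aux_key_norm hXp hYp hΦ (hφchar x hx)
  have hψnorm : ∀ y : Y, normFun R' ν y ≠ 0 → normFun R μ (ψ y) = normFun R' ν y :=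
    fun y hy => aux_key_norm hYp hXp hΨiso (hψchar y hy)
  have hψφ : ∀ x : X, normFun R μ x ≠ 0 → ψ (φ x) = x := by
    intro x hx
    have hν : normFun R' ν (φ x) ≠ 0 := by rw [hφnorm x hx]; exact hx
    have h2 := hψchar (φ x) hν
    have hmem : ∀ A ∈ R, (ψ (φ x) ∈ A ↔ x ∈ A) := by
      intro A hA
      have h3 := h2 (Φ A) (hΦ.1.1 hA)
      rw [hΨleft A hA] at h3
      rw [h3, hφchar x hx A hA]
    by_contra hne
    obtain ⟨A, hA, h1, h2'⟩ := hsepX (ψ (φ x)) x hne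
    exact h2' ((hmem A hA).mp h1)
  have hφψ : ∀ y : Y, normFun R' ν y ≠ 0 → φ (ψ y) = y := by
    intro y hy
    have hμ : normFun R μ (ψ y) ≠ 0 := by rw [hψnorm y hy]; exact hy
    have h2 := hφchar (ψ y) hμ
    have hmem : ∀ A' ∈ R', (φ (ψ y) ∈ A' ↔ y ∈ A') := by
      intro A' hA'
      have hΨA := hΨiso.1.1 hA'
      have h3 := h2 (Ψ A') hΨA
      rw [hΨright A' hA'] at h3
      rw [h3, hψchar y hy A' hA']
    by_contra hne
    obtain ⟨A', hA', h1, h2'⟩ := hsepY (φ (ψ y)) y hne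
    exact h2' ((hmem A' hA').mp h1)
  refine ⟨φ, ⟨?_, ?_, ?_⟩, ?_, ?_⟩
  · intro x hx
    show normFun R' ν (φ x) ≠ 0
    rw [hφnorm x hx]; exact hx
  · intro x1 h1 x2 h2 heq
    rw [← hψφ x1 h1, ← hψφ x2 h2, heq]
  · intro y hy
    have hy' : normFun R' ν y ≠ 0 := hy
    have hμ : normFun R μ (ψ y) ≠ 0 := by rw [hψnorm y hy']; exact hy'
    exact ⟨ψ y, hμ, hφψ y hy'⟩
  · intro A hA
    ext y
    constructor
    · rintro ⟨x, ⟨hxA, hx⟩, rfl⟩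
      have hx' : normFun R μ x ≠ 0 := hx
      refine ⟨(hφchar x hx' A hA).mpr hxA, ?_⟩
      show normFun R' ν (φ x) ≠ 0
      rw [hφnorm x hx']; exact hx'
    · rintro ⟨hyA, hy⟩
      have hy' : normFun R' ν y ≠ 0 := hy
      have hμ : normFun R μ (ψ y) ≠ 0 := by rw [hψnorm y hy']; exact hy'
      refine ⟨ψ y, ⟨?_, hμ⟩, hφψ y hy'⟩
      have h3 := hψchar y hy' (Φ A) (hΦ.1.1 hA)
      rw [hΨleft A hA] at h3
      exact h3.mpr hyA
  · intro x hx
    have hx' : normFun R μ x ≠ 0 := hx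
    have hTx : normFun R μ (T x) ≠ 0 := by rw [aux_normFun_T hXp hT x]; exact hx'
    have hchar1 := hφchar (T x) hTx
    have hchar2 : ∀ A ∈ R, (S (φ x) ∈ Φ A ↔ T x ∈ A) := by
      intro A hA
      have h1 : S (φ x) ∈ Φ A ↔ φ x ∈ S ⁻¹' (Φ A) := Iff.rfl
      rw [h1, ← hΦT A hA, hφchar x hx' (T ⁻¹' A) (hT.2.2.1 A hA)]
      exact Iff.rfl
    exact aux_key_unique hsepY hΦ hchar1 hchar2
end

section
/- Let μ : R → K be a K-valued measure on a covering ring R on a set X. For any two finite partitions α and β of X relative to R, the measure entropy is subadditive: H_μ(α∨β) ≤ H_μ(α) + H_μ(β). -/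
open scoped Classical

section Aux

variable {X K : Type*} [NormedField K] {R : Set (Set X)} {μ : Set X → K}

lemma setNorm_nonneg' (A : Set X) : 0 ≤ setNorm R μ A :=
  Real.sSup_nonneg (by rintro r ⟨B, hB, hBA, rfl⟩; exact norm_nonneg _)

lemma norm_le_setNorm' (hμ : IsKMeasure R μ) {A' A B : Set X} (hA : A ∈ R)
    (hsub : A' ⊆ A) (hB : B ∈ R) (hBA : B ⊆ A') : ‖μ B‖ ≤ setNorm R μ A' := by
  obtain ⟨M, hM⟩ := hμ.bounded A hA
  refine le_csSup ⟨M, ?_⟩ ⟨B, hB, hBA, rfl⟩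
  rintro r ⟨B', hB', hB'A, rfl⟩
  exact hM B' hB' (hB'A.trans hsub)

lemma setNorm_mono' (hμ : IsKMeasure R μ) {A' A : Set X} (hA : A ∈ R) (hsub : A' ⊆ A) :
    setNorm R μ A' ≤ setNorm R μ A := by
  apply Real.sSup_le
  · rintro r ⟨B, hB, hBA, rfl⟩
    exact norm_le_setNorm' hμ hA subset_rfl hB (hBA.trans hsub)
  · exact setNorm_nonneg' A

lemma Hent_nonneg' (α : Finset (Set X)) : 0 ≤ Hent R μ α := by
  apply mul_nonneg
  · exact Real.sInf_nonneg (by rintro r ⟨A, hA, h0, rfl⟩; exact h0.le)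
  · rcases Nat.eq_zero_or_pos (Mcard R μ α) with h | h
    · simp [h]
    · exact Real.logb_nonneg one_lt_two (by exact_mod_cast h)

lemma pJoin_comm' (α β : Finset (Set X)) : pJoin α β = pJoin β α := by
  unfold pJoin
  ext C
  simp only [Finset.mem_filter, Finset.mem_image₂]
  constructor <;> rintro ⟨⟨A, hA, B, hB, rfl⟩, h⟩ <;>
    exact ⟨⟨B, hB, A, hA, Set.inter_comm B A⟩, h⟩

lemma meas_biUnion' (hR : IsCoveringRing R) (hμ : IsKMeasure R μ) (hempty : (∅ : Set X) ∈ R)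
    (hμ0 : μ ∅ = 0) (s : Finset (Set X)) (f : Set X → Set X)
    (hf : ∀ B ∈ s, f B ∈ R)
    (hdisj : ∀ B ∈ s, ∀ B' ∈ s, B ≠ B' → Disjoint (f B) (f B')) :
    (⋃ B ∈ s, f B) ∈ R ∧ μ (⋃ B ∈ s, f B) = ∑ B ∈ s, μ (f B) := by
  classical
  induction s using Finset.induction_on with
  | empty => simpa using ⟨hempty, hμ0⟩
  | @insert a s ha ih =>
    have hf' : ∀ B ∈ s, f B ∈ R := fun B hB => hf B (Finset.mem_insert_of_mem hB)
    have hd' : ∀ B ∈ s, ∀ B' ∈ s, B ≠ B' → Disjoint (f B) (f B') :=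
      fun B hB B' hB' h =>
        hdisj B (Finset.mem_insert_of_mem hB) B' (Finset.mem_insert_of_mem hB') h
    obtain ⟨hmem, heq⟩ := ih hf' hd'
    have hfa : f a ∈ R := hf a (Finset.mem_insert_self a s)
    have hdis : Disjoint (f a) (⋃ B ∈ s, f B) := by
      rw [Set.disjoint_iUnion₂_right]
      intro B hB
      exact hdisj a (Finset.mem_insert_self a s) B (Finset.mem_insert_of_mem hB)
        (fun h => ha (h ▸ hB))
    have hun : (⋃ B ∈ insert a s, f B) = f a ∪ ⋃ B ∈ s, f B := by
      simp [Finset.set_biUnion_insert]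
    rw [hun, Finset.sum_insert ha]
    exact ⟨(hR.2 _ hfa _ hmem).2.1, by rw [hμ.additive _ hfa _ hmem hdis, heq]⟩

end Aux

/-- For finite partitions `α`, `β` of `X` relative to `R`, the measure
entropy is subadditive: `H_μ(α ∨ β) ≤ H_μ(α) + H_μ(β)`. -/
theorem stmt13 {X K : Type*} [NontriviallyNormedField K] [CompleteSpace K]
    (hna : IsNonarchimedean (norm : K → ℝ))
    (R : Set (Set X)) (hR : IsCoveringRing R) (μ : Set X → K) (hμ : IsKMeasure R μ)
    (α β : Finset (Set X)) (hα : IsFinPartition R α) (hβ : IsFinPartition R β) :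
    Hent R μ (pJoin α β) ≤ Hent R μ α + Hent R μ β := by
  classical
  by_cases hMj : Mcard R μ (pJoin α β) = 0
  · have hz : Hent R μ (pJoin α β) = 0 := by
      unfold Hent; rw [hMj]; simp
    rw [hz]
    exact add_nonneg (Hent_nonneg' α) (Hent_nonneg' β)
  -- nonempty case
  obtain ⟨C0, hC0⟩ := Finset.card_pos.mp (Nat.pos_of_ne_zero hMj)
  have hC0' := hC0
  simp only [Finset.mem_filter, pJoin, Finset.mem_image₂] at hC0'
  obtain ⟨⟨⟨A1, hA1, B1, hB1, hAB1⟩, hC0ne⟩, hC0pos⟩ := hC0'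
  obtain ⟨x, hx⟩ := Set.nonempty_iff_ne_empty.mpr hC0ne
  obtain ⟨A0, hA0, -⟩ := hR.1 x
  have hempty : (∅ : Set X) ∈ R := by
    have := (hR.2 A0 hA0 A0 hA0).2.2
    simpa using this
  have hμ0 : μ (∅ : Set X) = 0 := by
    have h := hμ.additive ∅ hempty ∅ hempty (by simp)
    simp only [Set.union_self] at h
    exact (left_eq_add.mp h)
  -- key lemma
  have key : ∀ (γ δ : Finset (Set X)), IsFinPartition R γ → IsFinPartition R δ →
      ∀ A ∈ γ, 0 < setNorm R μ A → ∃ C ∈ pJoin γ δ, C ⊆ A ∧ 0 < setNorm R μ C := by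
    intro γ δ hγ hδ A hAγ hApos
    have hAR : A ∈ R := hγ.1 A hAγ
    have hex : ∃ B ∈ R, B ⊆ A ∧ 0 < ‖μ B‖ := by
      by_contra hcon
      push_neg at hcon
      have hle : setNorm R μ A ≤ 0 := by
        apply Real.sSup_le _ le_rfl
        rintro r ⟨B, hB, hBA, rfl⟩
        exact hcon B hB hBA
      linarith
    obtain ⟨B, hBR, hBA, hBpos⟩ := hex
    have hsum := meas_biUnion' hR hμ hempty hμ0 δ (fun B' => B ∩ B')
      (fun B' hB' => (hR.2 B hBR B' (hδ.1 B' hB')).1)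
      (fun B1' h1 B2' h2 hne => Disjoint.mono Set.inter_subset_right Set.inter_subset_right
        (hδ.2.2.1 B1' h1 B2' h2 hne))
    have hBeq : (⋃ B' ∈ δ, B ∩ B') = B := by
      rw [← Set.inter_iUnion₂]
      have hu : ⋃ B' ∈ δ, (B' : Set X) = Set.univ := by
        have h4 := hδ.2.2.2
        rw [Set.sUnion_eq_biUnion] at h4
        simpa using h4
      rw [hu, Set.inter_univ]
    rw [hBeq] at hsum
    have hμB : μ B = ∑ B' ∈ δ, μ (B ∩ B') := hsum.2
    have hex2 : ∃ B' ∈ δ, μ (B ∩ B') ≠ 0 := by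
      by_contra hcon
      push_neg at hcon
      rw [Finset.sum_eq_zero hcon] at hμB
      simp [hμB] at hBpos
    obtain ⟨B', hB'δ, hne0⟩ := hex2
    have hBB'sub : B ∩ B' ⊆ A ∩ B' := Set.inter_subset_inter_left B' hBA
    refine ⟨A ∩ B', ?_, Set.inter_subset_left, ?_⟩
    · have hne : A ∩ B' ≠ ∅ := by
        intro h
        have hBB' : B ∩ B' = ∅ := Set.subset_empty_iff.mp (h ▸ hBB'sub)
        exact hne0 (by rw [hBB', hμ0])
      simp only [pJoin, Finset.mem_filter, Finset.mem_image₂]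
      exact ⟨⟨A, hAγ, B', hB'δ, rfl⟩, hne⟩
    · have hle : ‖μ (B ∩ B')‖ ≤ setNorm R μ (A ∩ B') :=
        norm_le_setNorm' hμ hAR Set.inter_subset_left
          ((hR.2 B hBR B' (hδ.1 B' hB'δ)).1) hBB'sub
      have hpos : 0 < ‖μ (B ∩ B')‖ := norm_pos_iff.mpr hne0
      linarith
  -- positivity of coarse elements
  have hC0A1 : C0 = A1 ∩ B1 := hAB1.symm
  have hA1pos : 0 < setNorm R μ A1 :=
    lt_of_lt_of_le hC0pos (setNorm_mono' hμ (hα.1 A1 hA1) (hC0A1 ▸ Set.inter_subset_left))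
  have hB1pos : 0 < setNorm R μ B1 :=
    lt_of_lt_of_le hC0pos (setNorm_mono' hμ (hβ.1 B1 hB1) (hC0A1 ▸ Set.inter_subset_right))
  have hMα : 1 ≤ Mcard R μ α :=
    Finset.card_pos.mpr ⟨A1, Finset.mem_filter.mpr ⟨hA1, hA1pos⟩⟩
  have hMβ : 1 ≤ Mcard R μ β :=
    Finset.card_pos.mpr ⟨B1, Finset.mem_filter.mpr ⟨hB1, hB1pos⟩⟩
  -- cardinality bound
  have hcard : Mcard R μ (pJoin α β) ≤ Mcard R μ α * Mcard R μ β := by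
    set S := (pJoin α β).filter (fun C => 0 < setNorm R μ C) with hS
    set f : Set X → Set X × Set X := fun C =>
      if h : ∃ p : Set X × Set X, p.1 ∈ α ∧ p.2 ∈ β ∧ p.1 ∩ p.2 = C then h.choose
      else (∅, ∅) with hf
    have hfspec : ∀ C ∈ S, (f C).1 ∈ α ∧ (f C).2 ∈ β ∧ (f C).1 ∩ (f C).2 = C := by
      intro C hC
      simp only [hS, Finset.mem_filter, pJoin, Finset.mem_image₂] at hC
      obtain ⟨⟨⟨A, hA, B, hB, hAB⟩, hne⟩, hpos⟩ := hC
      have hex : ∃ p : Set X × Set X, p.1 ∈ α ∧ p.2 ∈ β ∧ p.1 ∩ p.2 = C :=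
        ⟨(A, B), hA, hB, hAB⟩
      simp only [hf, dif_pos hex]
      exact hex.choose_spec
    have hmaps : ∀ C ∈ S, f C ∈
        (α.filter (fun A => 0 < setNorm R μ A)) ×ˢ (β.filter (fun B => 0 < setNorm R μ B)) := by
      intro C hC
      obtain ⟨h1, h2, h3⟩ := hfspec C hC
      have hpos : 0 < setNorm R μ C := (Finset.mem_filter.mp hC).2
      have hsub1 : C ⊆ (f C).1 := by nth_rewrite 1 [← h3]; exact Set.inter_subset_left
      have hsub2 : C ⊆ (f C).2 := by nth_rewrite 1 [← h3]; exact Set.inter_subset_right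
      refine Finset.mem_product.mpr ⟨Finset.mem_filter.mpr ⟨h1, ?_⟩,
        Finset.mem_filter.mpr ⟨h2, ?_⟩⟩
      · exact lt_of_lt_of_le hpos (setNorm_mono' hμ (hα.1 _ h1) hsub1)
      · exact lt_of_lt_of_le hpos (setNorm_mono' hμ (hβ.1 _ h2) hsub2)
    have hinj : Set.InjOn f S := by
      intro C hC C' hC' heq
      have h3 := (hfspec C hC).2.2
      have h3' := (hfspec C' hC').2.2
      rw [← h3, ← h3', heq]
    calc Mcard R μ (pJoin α β) = S.card := rfl
      _ ≤ ((α.filter (fun A => 0 < setNorm R μ A)) ×ˢ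
            (β.filter (fun B => 0 < setNorm R μ B))).card :=
          Finset.card_le_card_of_injOn f hmaps hinj
      _ = Mcard R μ α * Mcard R μ β := Finset.card_product _ _
  -- infima
  set Sj := {r : ℝ | ∃ A ∈ pJoin α β, 0 < setNorm R μ A ∧ r = setNorm R μ A} with hSj
  set Sa := {r : ℝ | ∃ A ∈ α, 0 < setNorm R μ A ∧ r = setNorm R μ A} with hSa
  set Sb := {r : ℝ | ∃ A ∈ β, 0 < setNorm R μ A ∧ r = setNorm R μ A} with hSb
  have hbdd : BddBelow Sj := ⟨0, by rintro r ⟨D, -, -, rfl⟩; exact setNorm_nonneg' D⟩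
  have hm0 : 0 ≤ sInf Sj := Real.sInf_nonneg (by rintro r ⟨A, -, h0, rfl⟩; exact h0.le)
  have hmle : ∀ γ : Finset (Set X), IsFinPartition R γ →
      (∀ A ∈ γ, 0 < setNorm R μ A → (∃ C ∈ pJoin α β, C ⊆ A ∧ 0 < setNorm R μ C)) →
      ∀ A ∈ γ, 0 < setNorm R μ A → sInf Sj ≤ setNorm R μ A := by
    intro γ hγ hk A hA hpos
    obtain ⟨C, hC, hsub, hCpos⟩ := hk A hA hpos
    have h1 : sInf Sj ≤ setNorm R μ C := csInf_le hbdd ⟨C, hC, hCpos, rfl⟩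
    exact h1.trans (setNorm_mono' hμ (hγ.1 A hA) hsub)
  have hmα : sInf Sj ≤ sInf Sa := by
    have hne : Sa.Nonempty := ⟨setNorm R μ A1, A1, hA1, hA1pos, rfl⟩
    apply le_csInf hne
    rintro r ⟨A, hA, hpos, rfl⟩
    exact hmle α hα (fun A' hA' hp => key α β hα hβ A' hA' hp) A hA hpos
  have hmβ : sInf Sj ≤ sInf Sb := by
    have hne : Sb.Nonempty := ⟨setNorm R μ B1, B1, hB1, hB1pos, rfl⟩
    apply le_csInf hne
    rintro r ⟨B, hB, hpos, rfl⟩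
    refine hmle β hβ (fun B' hB' hp => ?_) B hB hpos
    obtain ⟨C, hC, hsub, hCpos⟩ := key β α hβ hα B' hB' hp
    exact ⟨C, pJoin_comm' β α ▸ hC, hsub, hCpos⟩
  -- log bound
  have hMj1 : 1 ≤ Mcard R μ (pJoin α β) := Nat.one_le_iff_ne_zero.mpr hMj
  have hα0 : (0:ℝ) < (Mcard R μ α : ℝ) := by exact_mod_cast hMα
  have hβ0 : (0:ℝ) < (Mcard R μ β : ℝ) := by exact_mod_cast hMβ
  have hj0 : (0:ℝ) < (Mcard R μ (pJoin α β) : ℝ) := by exact_mod_cast hMj1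
  have hlog : Real.logb 2 (Mcard R μ (pJoin α β) : ℝ) ≤
      Real.logb 2 (Mcard R μ α : ℝ) + Real.logb 2 (Mcard R μ β : ℝ) := by
    rw [← Real.logb_mul (ne_of_gt hα0) (ne_of_gt hβ0)]
    apply Real.logb_le_logb_of_le one_lt_two hj0
    calc ((Mcard R μ (pJoin α β) : ℕ) : ℝ) ≤ ((Mcard R μ α * Mcard R μ β : ℕ) : ℝ) := by
          exact_mod_cast hcard
      _ = (Mcard R μ α : ℝ) * (Mcard R μ β : ℝ) := by push_cast; ring
  have hlogα : 0 ≤ Real.logb 2 (Mcard R μ α : ℝ) :=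
    Real.logb_nonneg one_lt_two (by exact_mod_cast hMα)
  have hlogβ : 0 ≤ Real.logb 2 (Mcard R μ β : ℝ) :=
    Real.logb_nonneg one_lt_two (by exact_mod_cast hMβ)
  show sInf Sj * Real.logb 2 (Mcard R μ (pJoin α β) : ℝ) ≤
      sInf Sa * Real.logb 2 (Mcard R μ α : ℝ) + sInf Sb * Real.logb 2 (Mcard R μ β : ℝ)
  calc sInf Sj * Real.logb 2 (Mcard R μ (pJoin α β) : ℝ)
      ≤ sInf Sj * (Real.logb 2 (Mcard R μ α : ℝ) + Real.logb 2 (Mcard R μ β : ℝ)) :=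
        mul_le_mul_of_nonneg_left hlog hm0
    _ = sInf Sj * Real.logb 2 (Mcard R μ α : ℝ) + sInf Sj * Real.logb 2 (Mcard R μ β : ℝ) :=
        mul_add _ _ _
    _ ≤ sInf Sa * Real.logb 2 (Mcard R μ α : ℝ) + sInf Sb * Real.logb 2 (Mcard R μ β : ℝ) :=
        add_le_add (mul_le_mul_of_nonneg_right hmα hlogα)
          (mul_le_mul_of_nonneg_right hmβ hlogβ)
end
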